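/- In a globally hyperbolic, causally path-connected, approximating Lorentzian pre-length space where the space of causal curves C(p,q) between any two points is compact (in Hausdorff distance), the causal diamonds J(p,q) = J⁺(p) ∩ J⁻(q) are compact for all p ≤ q. -/
import Mathlib


open Set Filter Topology MeasureTheory TopologicalSpace

/-- A Lorentzian pre-length space structure on a metric space `X`:
a preorder `causal` (≤), a transitive relation `chron` (≪) contained in `causal`,
and a lower semicontinuous time separation function `tau` satisfying the usual axioms. -/
structure LPLS (X : Type*) [MetricSpace X] where
  causal : X → X → Prop
  chron : X → X → Prop
  tau : X → X → ENNReal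
  causal_refl : ∀ x, causal x x
  causal_trans : ∀ {x y z}, causal x y → causal y z → causal x z
  chron_trans : ∀ {x y z}, chron x y → chron y z → chron x z
  chron_subset_causal : ∀ {x y}, chron x y → causal x y
  tau_lsc : LowerSemicontinuous fun p : X × X => tau p.1 p.2
  tau_pos : ∀ {x y}, chron x y → 0 < tau x y
  tau_eq_zero : ∀ {x y}, ¬ causal x y → tau x y = 0
  tau_superadd : ∀ {x y z}, causal x y → causal y z → tau x y + tau y z ≤ tau x z

variable {X : Type*} [MetricSpace X]

namespace LPLS

/-- chronological future `I⁺(p)` -/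
def Iplus (L : LPLS X) (p : X) : Set X := {x | L.chron p x}
/-- chronological past `I⁻(p)` -/
def Iminus (L : LPLS X) (p : X) : Set X := {x | L.chron x p}
/-- causal future `J⁺(p)` -/
def Jplus (L : LPLS X) (p : X) : Set X := {x | L.causal p x}
/-- causal past `J⁻(p)` -/
def Jminus (L : LPLS X) (p : X) : Set X := {x | L.causal x p}

def IplusSet (L : LPLS X) (S : Set X) : Set X := ⋃ p ∈ S, L.Iplus p
def IminusSet (L : LPLS X) (S : Set X) : Set X := ⋃ p ∈ S, L.Iminus p
def JplusSet (L : LPLS X) (S : Set X) : Set X := ⋃ p ∈ S, L.Jplus p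
def JminusSet (L : LPLS X) (S : Set X) : Set X := ⋃ p ∈ S, L.Jminus p

/-- a map is locally Lipschitz on a set `I` -/
def LocLipOn (I : Set ℝ) (γ : ℝ → X) : Prop :=
  ∀ s ∈ I, ∃ K : NNReal, ∃ U ∈ nhdsWithin s I, LipschitzOnWith K γ U

/-- future-directed causal curve with parameter domain `I`:
non-constant, locally Lipschitz and monotone with respect to the causal relation. -/
def IsCausalCurveOn (L : LPLS X) (I : Set ℝ) (γ : ℝ → X) : Prop :=
  (¬ ∀ s ∈ I, ∀ t ∈ I, γ s = γ t) ∧ LocLipOn I γ ∧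
    ∀ ⦃s⦄, s ∈ I → ∀ ⦃t⦄, t ∈ I → s < t → L.causal (γ s) (γ t)

/-- future-directed timelike curve with parameter domain `I`. -/
def IsTimelikeCurveOn (L : LPLS X) (I : Set ℝ) (γ : ℝ → X) : Prop :=
  (¬ ∀ s ∈ I, ∀ t ∈ I, γ s = γ t) ∧ LocLipOn I γ ∧
    ∀ ⦃s⦄, s ∈ I → ∀ ⦃t⦄, t ∈ I → s < t → L.chron (γ s) (γ t)

/-- causal path-connectedness -/
def CausallyPathConnected (L : LPLS X) : Prop :=
  (∀ p q : X, L.causal p q → p ≠ q →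
    ∃ γ : ℝ → X, L.IsCausalCurveOn (Icc 0 1) γ ∧ γ 0 = p ∧ γ 1 = q) ∧
  (∀ p q : X, L.chron p q →
    ∃ γ : ℝ → X, L.IsTimelikeCurveOn (Icc 0 1) γ ∧ γ 0 = p ∧ γ 1 = q)

/-- the relation `≤_U`: connected by a causal curve inside `U` -/
def causalIn (L : LPLS X) (U : Set X) (p q : X) : Prop :=
  ∃ γ : ℝ → X, L.IsCausalCurveOn (Icc 0 1) γ ∧ γ 0 = p ∧ γ 1 = q ∧
    ∀ s ∈ Icc (0:ℝ) 1, γ s ∈ U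

/-- every point has a neighbourhood `U` such that `≤_U` is closed -/
def LocallyWeaklyCausallyClosed (L : LPLS X) : Prop :=
  ∀ p : X, ∃ U ∈ 𝓝 p, IsClosed {z : X × X | L.causalIn U z.1 z.2}

/-- `d`-compatibility: local uniform bound for the `d`-arclength of causal curves -/
def DCompatible (L : LPLS X) : Prop :=
  ∀ p : X, ∃ U ∈ 𝓝 p, ∃ C : ℝ, ∀ (I : Set ℝ) (γ : ℝ → X),
    L.IsCausalCurveOn I γ → (∀ s ∈ I, γ s ∈ U) → eVariationOn γ I ≤ ENNReal.ofReal C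

/-- a Lorentzian pre-length space with limit curves: causally path-connected,
locally weakly causally closed and `d`-compatible -/
def HasLimitCurves (L : LPLS X) : Prop :=
  L.CausallyPathConnected ∧ L.LocallyWeaklyCausallyClosed ∧ L.DCompatible

def FutureApproximating (L : LPLS X) : Prop := ∀ p : X, L.Jplus p ⊆ closure (L.Iplus p)
def PastApproximating (L : LPLS X) : Prop := ∀ p : X, L.Jminus p ⊆ closure (L.Iminus p)
def Approximating (L : LPLS X) : Prop := L.FutureApproximating ∧ L.PastApproximating

/-- non-total imprisonment: a uniform arclength bound for causal curves in any compact set -/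
def NonTotallyImprisoning (L : LPLS X) : Prop :=
  ∀ K : Set X, IsCompact K → ∃ C : ℝ, 0 < C ∧ ∀ (I : Set ℝ) (γ : ℝ → X),
    L.IsCausalCurveOn I γ → (∀ s ∈ I, γ s ∈ K) → eVariationOn γ I ≤ ENNReal.ofReal C

/-- future-inextendible (future-directed) causal curve, parametrized on `[0,∞)`;
by the analogue of [KuSa, Lemma 3.12] inextendibility is captured by the
nonexistence of the limit at `+∞`. -/
def IsFutureInextCurve (L : LPLS X) (γ : ℝ → X) : Prop :=
  L.IsCausalCurveOn (Ici 0) γ ∧ ∀ p : X, ¬ Tendsto γ atTop (𝓝 p)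

/-- past-inextendible (future-directed) causal curve, parametrized on `(-∞,0]`. -/
def IsPastInextCurve (L : LPLS X) (γ : ℝ → X) : Prop :=
  L.IsCausalCurveOn (Iic 0) γ ∧ ∀ p : X, ¬ Tendsto γ atBot (𝓝 p)

/-- doubly-inextendible causal curve, parametrized on all of `ℝ`. -/
def IsDoublyInextCurve (L : LPLS X) (γ : ℝ → X) : Prop :=
  L.IsCausalCurveOn univ γ ∧ (∀ p : X, ¬ Tendsto γ atTop (𝓝 p)) ∧
    (∀ p : X, ¬ Tendsto γ atBot (𝓝 p))

/-- a Cauchy set: every doubly-inextendible causal curve meets it exactly once -/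
def IsCauchySet (L : LPLS X) (S : Set X) : Prop :=
  ∀ γ : ℝ → X, L.IsDoublyInextCurve γ →
    (∃ u : ℝ, γ u ∈ S) ∧ ∀ u v : ℝ, γ u ∈ S → γ v ∈ S → γ u = γ v

/-- volume of the open `r`-thickening of `I⁻(p)` -/
noncomputable def Vminus (L : LPLS X) [MeasurableSpace X] (μ : Measure X) (r : ℝ) (p : X) : ℝ :=
  (μ (Metric.thickening r (L.Iminus p))).toReal

/-- the averaged past volume function `t⁻(p) = ∫₀¹ V⁻ᵣ(p) dr` (without the sign) -/
noncomputable def tminus (L : LPLS X) [MeasurableSpace X] (μ : Measure X) (p : X) : ℝ :=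
  ∫ r in Ioo (0:ℝ) 1, L.Vminus μ r p

/-- full support: every nonempty open set has positive measure -/
def FullSupport [MeasurableSpace X] (μ : Measure X) : Prop :=
  ∀ U : Set X, IsOpen U → U.Nonempty → 0 < μ U

end LPLS


section Aux

variable {X : Type*} [MetricSpace X]

lemma LPLS.LocLipOn.continuousOn {I : Set ℝ} {γ : ℝ → X}
    (h : LPLS.LocLipOn I γ) : ContinuousOn γ I := by
  intro s hs
  obtain ⟨K, U, hU, hL⟩ := h s hs
  obtain ⟨V, hVo, haV, hsub⟩ := mem_nhdsWithin.mp hU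
  exact (hL.continuousOn s (hsub ⟨haV, hs⟩)).mono_of_mem_nhdsWithin hU

lemma lipschitzWith_three_linear (c : ℝ) : LipschitzWith 3 (fun t : ℝ => 3 * t + c) := by
  apply LipschitzWith.of_dist_le_mul
  intro x y
  have : (3:ℝ) * x + c - (3 * y + c) = 3 * (x - y) := by ring
  simp only [Real.dist_eq, this, abs_mul]
  norm_num

/-- causal monotonicity of a causal curve in the non-strict sense -/
lemma LPLS.IsCausalCurveOn.causal_le {L : LPLS X} {I : Set ℝ} {γ : ℝ → X}
    (h : L.IsCausalCurveOn I γ) {s t : ℝ} (hs : s ∈ I) (ht : t ∈ I) (hst : s ≤ t) :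
    L.causal (γ s) (γ t) := by
  rcases eq_or_lt_of_le hst with rfl | hlt
  · exact L.causal_refl _
  · exact h.2.2 hs ht hlt

/-- Concatenation of two causal curves (with a plateau at the junction). -/
lemma LPLS.concat_causal (L : LPLS X) {γ₁ γ₂ : ℝ → X}
    (h1 : L.IsCausalCurveOn (Icc 0 1) γ₁) (h2 : L.IsCausalCurveOn (Icc 0 1) γ₂)
    (hglue : γ₁ 1 = γ₂ 0) (hne : γ₁ 0 ≠ γ₁ 1) :
    ∃ γ : ℝ → X, L.IsCausalCurveOn (Icc 0 1) γ ∧ γ 0 = γ₁ 0 ∧ γ 1 = γ₂ 1 ∧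
      γ (1/2) = γ₁ 1 := by
  set m₁ : ℝ → ℝ := fun t => min (3 * t) 1 with hm₁
  set m₂ : ℝ → ℝ := fun t => max (3 * t - 2) 0 with hm₂
  set γ : ℝ → X := fun t => if t ≤ 1/2 then γ₁ (m₁ t) else γ₂ (m₂ t) with hγ
  have hm₁maps : MapsTo m₁ (Icc (0:ℝ) 1) (Icc (0:ℝ) 1) := by
    intro t ht
    constructor
    · exact le_min (by linarith [ht.1]) (by norm_num)
    · exact min_le_right _ _
  have hm₂maps : MapsTo m₂ (Icc (0:ℝ) 1) (Icc (0:ℝ) 1) := by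
    intro t ht
    constructor
    · exact le_max_right _ _
    · exact max_le (by linarith [ht.2]) (by norm_num)
  have hm₁lip : LipschitzWith 3 m₁ := by
    have := (lipschitzWith_three_linear 0).min_const 1
    simpa [hm₁] using this
  have hm₂lip : LipschitzWith 3 m₂ := by
    have := (lipschitzWith_three_linear (-2)).max_const 0
    simpa [hm₂, sub_eq_add_neg] using this
  have hm₁mono : Monotone m₁ := by
    intro a b hab
    exact min_le_min (by linarith) le_rfl
  have hm₂mono : Monotone m₂ := by
    intro a b hab
    exact max_le_max (by linarith) le_rfl
  -- γ agrees with γ₁ ∘ m₁ on (-∞, 2/3] and with γ₂ ∘ m₂ on [1/3, ∞)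
  have eq1 : ∀ t : ℝ, t ≤ 2/3 → γ t = γ₁ (m₁ t) := by
    intro t ht
    by_cases h : t ≤ 1/2
    · show (if t ≤ 1/2 then γ₁ (m₁ t) else γ₂ (m₂ t)) = γ₁ (m₁ t)
      rw [if_pos h]
    · push_neg at h
      have h1 : m₂ t = 0 := by
        simp only [hm₂]; rw [max_eq_right]; linarith
      have h2 : m₁ t = 1 := by
        simp only [hm₁]; rw [min_eq_right]; linarith
      show (if t ≤ 1/2 then γ₁ (m₁ t) else γ₂ (m₂ t)) = γ₁ (m₁ t)
      rw [if_neg (not_le.mpr h), h1, h2, ← hglue]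
  have eq2 : ∀ t : ℝ, 1/3 ≤ t → γ t = γ₂ (m₂ t) := by
    intro t ht
    by_cases h : t ≤ 1/2
    · have h1 : m₂ t = 0 := by
        simp only [hm₂]; rw [max_eq_right]; linarith
      have h2 : m₁ t = 1 := by
        simp only [hm₁]; rw [min_eq_right]; linarith
      show (if t ≤ 1/2 then γ₁ (m₁ t) else γ₂ (m₂ t)) = γ₂ (m₂ t)
      rw [if_pos h, h1, h2, hglue]
    · show (if t ≤ 1/2 then γ₁ (m₁ t) else γ₂ (m₂ t)) = γ₂ (m₂ t)
      rw [if_neg h]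
  have hend0 : γ 0 = γ₁ 0 := by
    have : m₁ 0 = 0 := by simp only [hm₁]; norm_num
    rw [eq1 0 (by norm_num), this]
  have hend1 : γ 1 = γ₂ 1 := by
    have : m₂ 1 = 1 := by simp only [hm₂]; norm_num
    rw [eq2 1 (by norm_num), this]
  have hmid : γ (1/2) = γ₁ 1 := by
    have : m₁ (1/2 : ℝ) = 1 := by simp only [hm₁]; rw [min_eq_right]; norm_num
    rw [eq1 (1/2) (by norm_num), this]
  refine ⟨γ, ⟨?_, ?_, ?_⟩, hend0, hend1, hmid⟩
  · -- non-constant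
    intro hcon
    have h0 : (0:ℝ) ∈ Icc (0:ℝ) 1 := by norm_num
    have hhalf : (1/2:ℝ) ∈ Icc (0:ℝ) 1 := by norm_num
    exact hne (by rw [← hend0, ← hmid]; exact hcon 0 h0 (1/2) hhalf)
  · -- locally Lipschitz
    intro s hs
    by_cases hs23 : s < 2/3
    · obtain ⟨K, U, hU, hL⟩ := h1.2.1 (m₁ s) (hm₁maps hs)
      have htend : Tendsto m₁ (nhdsWithin s (Icc 0 1)) (nhdsWithin (m₁ s) (Icc 0 1)) :=
        (hm₁lip.continuous.continuousWithinAt).tendsto_nhdsWithin hm₁maps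
      have hU' : m₁ ⁻¹' U ∩ Iio (2/3) ∈ nhdsWithin s (Icc 0 1) :=
        inter_mem (htend hU) (mem_nhdsWithin_of_mem_nhds (Iio_mem_nhds hs23))
      refine ⟨K * 3, _, hU', ?_⟩
      have hcomp : LipschitzOnWith (K * 3) (γ₁ ∘ m₁) (m₁ ⁻¹' U ∩ Iio (2/3)) :=
        hL.comp hm₁lip.lipschitzOnWith
          (fun x hx => hx.1)
      intro x hx y hy
      rw [show γ x = (γ₁ ∘ m₁) x from eq1 x (le_of_lt hx.2),
          show γ y = (γ₁ ∘ m₁) y from eq1 y (le_of_lt hy.2)]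
      exact hcomp hx hy
    · push_neg at hs23
      have hs13 : 1/3 < s := by linarith
      obtain ⟨K, U, hU, hL⟩ := h2.2.1 (m₂ s) (hm₂maps hs)
      have htend : Tendsto m₂ (nhdsWithin s (Icc 0 1)) (nhdsWithin (m₂ s) (Icc 0 1)) :=
        (hm₂lip.continuous.continuousWithinAt).tendsto_nhdsWithin hm₂maps
      have hU' : m₂ ⁻¹' U ∩ Ioi (1/3) ∈ nhdsWithin s (Icc 0 1) :=
        inter_mem (htend hU) (mem_nhdsWithin_of_mem_nhds (Ioi_mem_nhds hs13))
      refine ⟨K * 3, _, hU', ?_⟩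
      have hcomp : LipschitzOnWith (K * 3) (γ₂ ∘ m₂) (m₂ ⁻¹' U ∩ Ioi (1/3)) :=
        hL.comp hm₂lip.lipschitzOnWith
          (fun x hx => hx.1)
      intro x hx y hy
      rw [show γ x = (γ₂ ∘ m₂) x from eq2 x (le_of_lt hx.2),
          show γ y = (γ₂ ∘ m₂) y from eq2 y (le_of_lt hy.2)]
      exact hcomp hx hy
  · -- causally monotone
    intro s hs t ht hst
    by_cases ht23 : t ≤ 2/3
    · rw [eq1 s (by linarith), eq1 t ht23]
      exact h1.causal_le (hm₁maps hs) (hm₁maps ht) (hm₁mono hst.le)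
    · push_neg at ht23
      by_cases hs13 : 1/3 ≤ s
      · rw [eq2 s hs13, eq2 t (by linarith)]
        exact h2.causal_le (hm₂maps hs) (hm₂maps ht) (hm₂mono hst.le)
      · push_neg at hs13
        rw [eq1 s (by linarith), eq2 t (by linarith)]
        have c1 : L.causal (γ₁ (m₁ s)) (γ₁ 1) :=
          h1.causal_le (hm₁maps hs) (by norm_num) (min_le_right _ _)
        have c2 : L.causal (γ₂ 0) (γ₂ (m₂ t)) :=
          h2.causal_le (by norm_num) (hm₂maps ht) (le_max_right _ _)
        rw [hglue] at c1
        exact L.causal_trans c1 c2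

end Aux

/-- If the spaces of causal curves `C(p,q)` (curve images, with the Hausdorff
distance) are compact, then the causal diamonds `J(p,q)` are compact. -/
theorem LPLS.isCompact_causalDiamond {X : Type*} [MetricSpace X]
    (L : LPLS X) (happ : L.Approximating) (hc : L.CausallyPathConnected)
    (hnti : L.NonTotallyImprisoning)
    (hcomp : ∀ p q : X, IsCompact {K : NonemptyCompacts X |
      ∃ γ : ℝ → X, L.IsCausalCurveOn (Icc 0 1) γ ∧ γ 0 = p ∧ γ 1 = q ∧
        (K : Set X) = γ '' Icc 0 1}) :
    ∀ p q : X, L.causal p q → IsCompact (L.Jplus p ∩ L.Jminus q) := by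
  intro p q hpq
  set S : Set (NonemptyCompacts X) := {K : NonemptyCompacts X |
      ∃ γ : ℝ → X, L.IsCausalCurveOn (Icc 0 1) γ ∧ γ 0 = p ∧ γ 1 = q ∧
        (K : Set X) = γ '' Icc 0 1} with hS
  have hScomp : IsCompact S := hcomp p q
  -- A curve in C(p,q) gives rise to an element of S
  have mkS : ∀ γ : ℝ → X, L.IsCausalCurveOn (Icc 0 1) γ → γ 0 = p → γ 1 = q →
      ∃ K ∈ S, (K : Set X) = γ '' Icc 0 1 := by
    intro γ hγ h0 h1
    have hcont : ContinuousOn γ (Icc 0 1) := hγ.2.1.continuousOn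
    have himg : IsCompact (γ '' Icc 0 1) := (isCompact_Icc).image_of_continuousOn hcont
    have hne : (γ '' Icc 0 1).Nonempty := ⟨γ 0, mem_image_of_mem _ (by norm_num)⟩
    exact ⟨⟨⟨γ '' Icc 0 1, himg⟩, hne⟩, ⟨γ, hγ, h0, h1, rfl⟩, rfl⟩
  -- every element of S lies inside the causal diamond
  have memJ : ∀ K ∈ S, ∀ x ∈ (K : Set X), x ∈ L.Jplus p ∩ L.Jminus q := by
    intro K hK x hx
    obtain ⟨γ, hγ, h0, h1, hKeq⟩ := hK
    rw [hKeq] at hx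
    obtain ⟨s, hsI, rfl⟩ := hx
    constructor
    · rw [← h0]; exact hγ.causal_le (by norm_num) hsI hsI.1
    · rw [← h1]; exact hγ.causal_le hsI (by norm_num) hsI.2
  by_cases hJ : L.Jplus p ∩ L.Jminus q ⊆ {p}
  · have : L.Jplus p ∩ L.Jminus q = {p} := by
      apply Subset.antisymm hJ
      intro x hx
      rw [mem_singleton_iff] at hx
      subst hx
      exact ⟨L.causal_refl x, hpq⟩
    rw [this]
    exact isCompact_singleton
  · rw [not_subset] at hJ
    obtain ⟨x₀, hx₀J, hx₀p⟩ := hJ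
    rw [mem_singleton_iff] at hx₀p
    -- every point of the diamond lies on some curve in S
    have cover : ∀ x ∈ L.Jplus p ∩ L.Jminus q, ∃ K ∈ S, x ∈ (K : Set X) := by
      have main : ∀ x ∈ L.Jplus p ∩ L.Jminus q, x ≠ p → x ≠ q →
          ∃ K ∈ S, x ∈ (K : Set X) := by
        intro x hx hxp hxq
        obtain ⟨γ₁, hγ₁, h10, h11⟩ := hc.1 p x hx.1 (Ne.symm hxp)
        obtain ⟨γ₂, hγ₂, h20, h21⟩ := hc.1 x q hx.2 hxq
        have hglue : γ₁ 1 = γ₂ 0 := by rw [h11, h20]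
        have hne : γ₁ 0 ≠ γ₁ 1 := by rw [h10, h11]; exact Ne.symm hxp
        obtain ⟨γ, hγ, hg0, hg1, hgm⟩ := L.concat_causal hγ₁ hγ₂ hglue hne
        obtain ⟨K, hKS, hKeq⟩ := mkS γ hγ (by rw [hg0, h10]) (by rw [hg1, h21])
        refine ⟨K, hKS, ?_⟩
        rw [hKeq]
        exact ⟨1/2, by norm_num, by rw [hgm, h11]⟩
      intro x hx
      by_cases hxp : x = p
      · by_cases hpq' : p = q
        · -- closed-curve case: use the loop through x₀
          have hx₀q : x₀ ≠ q := by rw [← hpq']; exact hx₀p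
          obtain ⟨K, hKS, _⟩ := main x₀ hx₀J hx₀p hx₀q
          obtain ⟨γ, hγ, h0, h1, hKeq⟩ := hKS
          refine ⟨K, ⟨γ, hγ, h0, h1, hKeq⟩, ?_⟩
          rw [hKeq, hxp, ← h0]
          exact mem_image_of_mem _ (by norm_num)
        · obtain ⟨γ, hγ, h0, h1⟩ := hc.1 p q hpq hpq'
          obtain ⟨K, hKS, hKeq⟩ := mkS γ hγ h0 h1
          refine ⟨K, hKS, ?_⟩
          rw [hKeq, hxp, ← h0]
          exact mem_image_of_mem _ (by norm_num)
      · by_cases hxq : x = q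
        · have hpq' : p ≠ q := fun h => hxp (hxq.trans h.symm)
          obtain ⟨γ, hγ, h0, h1⟩ := hc.1 p q hpq hpq'
          obtain ⟨K, hKS, hKeq⟩ := mkS γ hγ h0 h1
          refine ⟨K, hKS, ?_⟩
          rw [hKeq, hxq, ← h1]
          exact mem_image_of_mem _ (by norm_num)
        · exact main x hx hxp hxq
    -- sequential compactness argument
    apply IsSeqCompact.isCompact
    intro u hu
    choose Kf hKfS hKfmem using fun n => cover (u n) (hu n)
    obtain ⟨K, hKS, φ, hφ, hKtend⟩ := hScomp.isSeqCompact hKfS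
    -- distance from u (φ n) to K tends to zero
    have hdist : Tendsto (fun n => Metric.infDist (u (φ n)) (K : Set X)) atTop (nhds 0) := by
      have hbound : ∀ n, Metric.infDist (u (φ n)) (K : Set X) ≤ dist (Kf (φ n)) K := by
        intro n
        rw [Metric.NonemptyCompacts.dist_eq]
        apply Metric.infDist_le_hausdorffDist_of_mem (hKfmem (φ n))
        exact Metric.hausdorffEdist_ne_top_of_nonempty_of_bounded
          (Kf (φ n)).nonempty K.nonempty (Kf (φ n)).isCompact.isBounded
          K.isCompact.isBounded
      have hd0 : Tendsto (fun n => dist (Kf (φ n)) K) atTop (nhds 0) :=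
        tendsto_iff_dist_tendsto_zero.mp hKtend
      exact squeeze_zero (fun n => Metric.infDist_nonneg) hbound hd0
    -- choose nearest points on K
    have hKK : IsCompact (K : Set X) := K.isCompact
    choose y hyK hyd using fun n =>
      hKK.exists_infDist_eq_dist K.nonempty (u (φ n))
    obtain ⟨x₁, hx₁K, ψ, hψ, hytend⟩ := hKK.isSeqCompact hyK
    refine ⟨x₁, memJ K hKS x₁ hx₁K, φ ∘ ψ, hφ.comp hψ, ?_⟩
    rw [tendsto_iff_dist_tendsto_zero]
    have hb : ∀ n, dist (u (φ (ψ n))) x₁ ≤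
        Metric.infDist (u (φ (ψ n))) (K : Set X) + dist (y (ψ n)) x₁ := by
      intro n
      calc dist (u (φ (ψ n))) x₁ ≤ dist (u (φ (ψ n))) (y (ψ n)) + dist (y (ψ n)) x₁ :=
            dist_triangle _ _ _
        _ = Metric.infDist (u (φ (ψ n))) (K : Set X) + dist (y (ψ n)) x₁ := by
            rw [hyd (ψ n)]
    have ht1 : Tendsto (fun n => Metric.infDist (u (φ (ψ n))) (K : Set X)) atTop (nhds 0) :=
      hdist.comp hψ.tendsto_atTop
    have ht2 : Tendsto (fun n => dist (y (ψ n)) x₁) atTop (nhds 0) :=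
      tendsto_iff_dist_tendsto_zero.mp hytend
    have := squeeze_zero (fun n => dist_nonneg) hb (by simpa using ht1.add ht2)
    exact this
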